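/- arXiv:1308.1073 — 2 statements merged into one kernel-verified Lean document; each statement's English description precedes it below -/
import Mathlib

section
/- Let H be a separable complex Hilbert space, let α, β : G → H be bounded continuous functions, and let f, g ∈ L²(G). Then there exist sequences (F_n) and (G_n) in L²(G) such that Σ_n ‖F_n‖₂·‖G_n‖₂ ≤ (sup_{s∈G} ‖α(s)‖)·(sup_{t∈G} ‖β(t)‖)·‖f‖₂·‖g‖₂, and for almost every pair (s,t) ∈ G × G one has Σ_n F_n(s)·G_n(t) = f(s)·g(t)·⟪α(s), β(t)⟫, where ⟪·,·⟫ is the inner product of H. -/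
open MeasureTheory Filter Topology
open scoped ENNReal NNReal


lemma prod_null_left' {α β : Type*} [MeasurableSpace α] [MeasurableSpace β]
    (μ : Measure α) (ν : Measure β) {s : Set α} (hs : μ s = 0) :
    μ.prod ν (s ×ˢ (Set.univ : Set β)) = 0 := by
  obtain ⟨S, hsS, hSm, hS0⟩ := exists_measurable_superset_of_null hs
  refine measure_mono_null (Set.prod_mono_left hsS) ?_
  rw [Measure.prod]
  by_cases h : AEMeasurable (fun x => Measure.map (Prod.mk x) ν) μ
  · rw [Measure.bind, Measure.join_apply (hSm.prod MeasurableSet.univ),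
      lintegral_map' (Measure.measurable_coe (hSm.prod MeasurableSet.univ)).aemeasurable h]
    have h2 : ∀ᵐ x ∂μ, (Measure.map (Prod.mk x) ν) (S ×ˢ (Set.univ : Set β)) = 0 := by
      have : ∀ᵐ x ∂μ, x ∉ S := by
        rw [ae_iff]; simpa using hS0
      filter_upwards [this] with x hx
      rw [Measure.map_apply measurable_prodMk_left (hSm.prod MeasurableSet.univ)]
      have : (Prod.mk x ⁻¹' (S ×ˢ (Set.univ : Set β))) = ∅ := by
        ext y; simp [hx]
      simp [this]
    rw [lintegral_congr_ae h2, lintegral_zero]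
  · rw [Measure.bind, Measure.map_of_not_aemeasurable h, Measure.join_zero]
    rfl

lemma prod_null_right' {α β : Type*} [MeasurableSpace α] [MeasurableSpace β]
    (μ : Measure α) (ν : Measure β) {t : Set β} (ht : ν t = 0) :
    μ.prod ν ((Set.univ : Set α) ×ˢ t) = 0 := by
  obtain ⟨T, htT, hTm, hT0⟩ := exists_measurable_superset_of_null ht
  refine measure_mono_null (Set.prod_mono_right htT) ?_
  rw [Measure.prod]
  by_cases h : AEMeasurable (fun x => Measure.map (Prod.mk x) ν) μ
  · rw [Measure.bind, Measure.join_apply (MeasurableSet.univ.prod hTm),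
      lintegral_map' (Measure.measurable_coe (MeasurableSet.univ.prod hTm)).aemeasurable h]
    have h2 : ∀ x, (Measure.map (Prod.mk x) ν) ((Set.univ : Set α) ×ˢ T) = 0 := by
      intro x
      rw [Measure.map_apply measurable_prodMk_left (MeasurableSet.univ.prod hTm)]
      have : (Prod.mk x ⁻¹' ((Set.univ : Set α) ×ˢ T)) = T := by
        ext y; simp
      rw [this, hT0]
    simp only [h2, lintegral_zero]
  · rw [Measure.bind, Measure.map_of_not_aemeasurable h, Measure.join_zero]
    rfl

lemma ae_prod_of_ae_left {α β : Type*} [MeasurableSpace α] [MeasurableSpace β]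
    {μ : Measure α} {ν : Measure β} {p : α → Prop} (h : ∀ᵐ x ∂μ, p x) :
    ∀ᵐ z ∂μ.prod ν, p z.1 := by
  rw [ae_iff] at h ⊢
  refine measure_mono_null ?_ (prod_null_left' μ ν h)
  intro z hz; exact ⟨hz, trivial⟩

lemma ae_prod_of_ae_right {α β : Type*} [MeasurableSpace α] [MeasurableSpace β]
    {μ : Measure α} {ν : Measure β} {p : β → Prop} (h : ∀ᵐ y ∂ν, p y) :
    ∀ᵐ z ∂μ.prod ν, p z.2 := by
  rw [ae_iff] at h ⊢
  refine measure_mono_null ?_ (prod_null_right' μ ν h)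
  intro z hz; exact ⟨trivial, hz⟩

lemma L2_norm_sq {X : Type*} [MeasurableSpace X] {μ : Measure X} (F : Lp ℂ 2 μ) :
    ‖F‖ ^ 2 = ∫ a, ‖F a‖ ^ 2 ∂μ := by
  rw [@norm_sq_eq_re_inner ℂ, MeasureTheory.L2.inner_def]
  rw [integral_congr_ae (Eventually.of_forall (fun a => inner_self_eq_norm_sq_to_K (𝕜 := ℂ) (F a)))]
  simp_rw [← RCLike.ofReal_pow]
  rw [integral_ofReal, RCLike.ofReal_re]

lemma orthonormal_countable {H : Type*} [NormedAddCommGroup H] [InnerProductSpace ℂ H]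
    [TopologicalSpace.SeparableSpace H] {w : Set H}
    (hw : Orthonormal ℂ ((↑) : w → H)) : w.Countable := by
  have hdist : ∀ x ∈ w, ∀ y ∈ w, x ≠ y → (1:ℝ) ≤ dist x y := by
    intro x hx y hy hxy
    have hinner : (inner ℂ (x:H) y : ℂ) = 0 :=
      hw.2 (show (⟨x, hx⟩ : w) ≠ ⟨y, hy⟩ from fun h => hxy (congrArg Subtype.val h))
    have h2 : ‖x - y‖ ^ 2 = 2 := by
      rw [@norm_sub_sq ℂ]
      have hx1 : ‖x‖ = 1 := by simpa using hw.1 ⟨x, hx⟩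
      have hy1 : ‖y‖ = 1 := by simpa using hw.1 ⟨y, hy⟩
      rw [hx1, hy1, hinner]
      norm_num
    rw [dist_eq_norm]
    nlinarith [norm_nonneg (x - y), sq_nonneg (‖x - y‖ - 1)]
  have hpd : w.PairwiseDisjoint (fun x => Metric.ball x (1/2 : ℝ)) := by
    intro x hx y hy hxy
    refine Metric.ball_disjoint_ball ?_
    have := hdist x hx y hy hxy
    linarith
  exact hpd.countable_of_isOpen (fun x _ => Metric.isOpen_ball)
    (fun x _ => Metric.nonempty_ball.2 (by norm_num))

/-- Let `G` be a locally compact group with left Haar measure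
`μ`, `H` a separable complex Hilbert space, `α β : G → H` bounded continuous
functions, and `f, g ∈ L²(G)`.  Then there are sequences `(F_n)`, `(Gs_n)` in
`L²(G)` with `Σ_n ‖F_n‖₂·‖Gs_n‖₂ ≤ (sup_s ‖α(s)‖)·(sup_t ‖β(t)‖)·‖f‖₂·‖g‖₂` and,
for almost every `(s,t) ∈ G × G`, `Σ_n F_n(s)·Gs_n(t) = f(s)·g(t)·⟪α(s), β(t)⟫`. -/
theorem kernel_multiplication_L2
    {G : Type*} [Group G] [TopologicalSpace G] [IsTopologicalGroup G]
    [LocallyCompactSpace G] [MeasurableSpace G] [BorelSpace G]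
    (μ : Measure G) [μ.IsHaarMeasure]
    {H : Type*} [NormedAddCommGroup H] [InnerProductSpace ℂ H] [CompleteSpace H]
    [TopologicalSpace.SeparableSpace H]
    (α β : G → H) (hαc : Continuous α) (hβc : Continuous β)
    (hαb : ∃ M : ℝ, ∀ s, ‖α s‖ ≤ M) (hβb : ∃ M : ℝ, ∀ t, ‖β t‖ ≤ M)
    (f g : Lp ℂ 2 μ) :
    ∃ (F : ℕ → Lp ℂ 2 μ) (Gs : ℕ → Lp ℂ 2 μ),
      Summable (fun n => ‖F n‖ * ‖Gs n‖) ∧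
      (∑' n, ‖F n‖ * ‖Gs n‖) ≤ (⨆ s, ‖α s‖) * (⨆ t, ‖β t‖) * ‖f‖ * ‖g‖ ∧
      (∀ᵐ st ∂(μ.prod μ),
        HasSum (fun n => F n st.1 * Gs n st.2)
          (f st.1 * g st.2 * (@inner ℂ H _ (α st.1) (β st.2)))) := by
  classical
  obtain ⟨Mα, hMα⟩ := hαb
  obtain ⟨Mβ, hMβ⟩ := hβb
  set Cα := ⨆ s, ‖α s‖ with hCαdef
  set Cβ := ⨆ t, ‖β t‖ with hCβdef
  have hαle : ∀ s, ‖α s‖ ≤ Cα := fun s =>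
    le_ciSup ⟨Mα, by rintro _ ⟨s, rfl⟩; exact hMα s⟩ s
  have hβle : ∀ t, ‖β t‖ ≤ Cβ := fun t =>
    le_ciSup ⟨Mβ, by rintro _ ⟨t, rfl⟩; exact hMβ t⟩ t
  have hCα0 : 0 ≤ Cα := (norm_nonneg (α 1)).trans (hαle 1)
  have hCβ0 : 0 ≤ Cβ := (norm_nonneg (β 1)).trans (hβle 1)
  -- Hilbert basis
  obtain ⟨w, b, hb⟩ := exists_hilbertBasis ℂ H
  have hwcnt : w.Countable := orthonormal_countable (hb ▸ b.orthonormal)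
  haveI : Countable w := hwcnt.to_subtype
  obtain ⟨ι, hι⟩ := Countable.exists_injective_nat w
  -- membership in L²
  have hφm : ∀ i : w, MemLp (fun s => f s * (inner ℂ (α s) (b i : H) : ℂ)) 2 μ := by
    intro i
    refine MemLp.of_le_mul (c := Cα) (Lp.memLp f)
      ((Lp.aestronglyMeasurable f).mul
        ((hαc.inner continuous_const).aestronglyMeasurable)) ?_
    refine Eventually.of_forall fun s => ?_
    rw [norm_mul, mul_comm]
    refine mul_le_mul_of_nonneg_right ?_ (norm_nonneg _)
    calc ‖(inner ℂ (α s) (b i : H) : ℂ)‖ ≤ ‖α s‖ * ‖(b i : H)‖ := norm_inner_le_norm _ _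
      _ = ‖α s‖ := by rw [b.orthonormal.1 i, mul_one]
      _ ≤ Cα := hαle s
  have hψm : ∀ i : w, MemLp (fun t => g t * (inner ℂ (b i : H) (β t) : ℂ)) 2 μ := by
    intro i
    refine MemLp.of_le_mul (c := Cβ) (Lp.memLp g)
      ((Lp.aestronglyMeasurable g).mul
        ((continuous_const.inner hβc).aestronglyMeasurable)) ?_
    refine Eventually.of_forall fun t => ?_
    rw [norm_mul, mul_comm]
    refine mul_le_mul_of_nonneg_right ?_ (norm_nonneg _)
    calc ‖(inner ℂ (b i : H) (β t) : ℂ)‖ ≤ ‖(b i : H)‖ * ‖β t‖ := norm_inner_le_norm _ _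
      _ = ‖β t‖ := by rw [b.orthonormal.1 i, one_mul]
      _ ≤ Cβ := hβle t
  set F' : w → Lp ℂ 2 μ := fun i => (hφm i).toLp _ with hF'def
  set G' : w → Lp ℂ 2 μ := fun i => (hψm i).toLp _ with hG'def
  -- square-sum bounds
  have hfint : Integrable (fun s => ‖f s‖ ^ 2) μ :=
    (memLp_two_iff_integrable_sq_norm (Lp.aestronglyMeasurable f)).1 (Lp.memLp f)
  have hgint : Integrable (fun t => ‖g t‖ ^ 2) μ :=
    (memLp_two_iff_integrable_sq_norm (Lp.aestronglyMeasurable g)).1 (Lp.memLp g)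
  have hφint : ∀ i : w, Integrable (fun s => ‖f s * (inner ℂ (α s) (b i : H) : ℂ)‖ ^ 2) μ :=
    fun i => (memLp_two_iff_integrable_sq_norm (hφm i).aestronglyMeasurable).1 (hφm i)
  have hψint : ∀ i : w, Integrable (fun t => ‖g t * (inner ℂ (b i : H) (β t) : ℂ)‖ ^ 2) μ :=
    fun i => (memLp_two_iff_integrable_sq_norm (hψm i).aestronglyMeasurable).1 (hψm i)
  have hFnormsq : ∀ i : w, ‖F' i‖ ^ 2 = ∫ s, ‖f s * (inner ℂ (α s) (b i : H) : ℂ)‖ ^ 2 ∂μ := by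
    intro i
    rw [L2_norm_sq]
    exact integral_congr_ae ((hφm i).coeFn_toLp.mono fun s hs => by simp only [hF'def]; rw [hs])
  have hGnormsq : ∀ i : w, ‖G' i‖ ^ 2 = ∫ t, ‖g t * (inner ℂ (b i : H) (β t) : ℂ)‖ ^ 2 ∂μ := by
    intro i
    rw [L2_norm_sq]
    exact integral_congr_ae ((hψm i).coeFn_toLp.mono fun t ht => by simp only [hG'def]; rw [ht])
  have hsumF : ∀ u : Finset w, ∑ i ∈ u, ‖F' i‖ ^ 2 ≤ Cα ^ 2 * ‖f‖ ^ 2 := by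
    intro u
    calc ∑ i ∈ u, ‖F' i‖ ^ 2
        = ∫ s, ∑ i ∈ u, ‖f s * (inner ℂ (α s) (b i : H) : ℂ)‖ ^ 2 ∂μ := by
          simp_rw [hFnormsq]
          exact (integral_finset_sum u fun i _ => hφint i).symm
      _ ≤ ∫ s, Cα ^ 2 * ‖f s‖ ^ 2 ∂μ := by
          refine integral_mono (integrable_finset_sum u fun i _ => hφint i)
            (hfint.const_mul _) fun s => ?_
          have hb2 : ∑ i ∈ u, ‖(inner ℂ (α s) (b i : H) : ℂ)‖ ^ 2 ≤ ‖α s‖ ^ 2 := by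
            have h := b.orthonormal.sum_inner_products_le (α s) (s := u)
            simpa [norm_inner_symm] using h
          calc ∑ i ∈ u, ‖f s * (inner ℂ (α s) (b i : H) : ℂ)‖ ^ 2
              = ‖f s‖ ^ 2 * ∑ i ∈ u, ‖(inner ℂ (α s) (b i : H) : ℂ)‖ ^ 2 := by
                simp_rw [norm_mul, mul_pow, Finset.mul_sum]
            _ ≤ ‖f s‖ ^ 2 * ‖α s‖ ^ 2 := by
                exact mul_le_mul_of_nonneg_left hb2 (by positivity)
            _ ≤ ‖f s‖ ^ 2 * Cα ^ 2 := by
                refine mul_le_mul_of_nonneg_left ?_ (by positivity)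
                exact pow_le_pow_left₀ (norm_nonneg _) (hαle s) 2
            _ = Cα ^ 2 * ‖f s‖ ^ 2 := mul_comm _ _
      _ = Cα ^ 2 * ‖f‖ ^ 2 := by rw [integral_const_mul, ← L2_norm_sq]
  have hsumG : ∀ u : Finset w, ∑ i ∈ u, ‖G' i‖ ^ 2 ≤ Cβ ^ 2 * ‖g‖ ^ 2 := by
    intro u
    calc ∑ i ∈ u, ‖G' i‖ ^ 2
        = ∫ t, ∑ i ∈ u, ‖g t * (inner ℂ (b i : H) (β t) : ℂ)‖ ^ 2 ∂μ := by
          simp_rw [hGnormsq]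
          exact (integral_finset_sum u fun i _ => hψint i).symm
      _ ≤ ∫ t, Cβ ^ 2 * ‖g t‖ ^ 2 ∂μ := by
          refine integral_mono (integrable_finset_sum u fun i _ => hψint i)
            (hgint.const_mul _) fun t => ?_
          have hb2 : ∑ i ∈ u, ‖(inner ℂ (b i : H) (β t) : ℂ)‖ ^ 2 ≤ ‖β t‖ ^ 2 := by
            have h := b.orthonormal.sum_inner_products_le (β t) (s := u)
            simpa using h
          calc ∑ i ∈ u, ‖g t * (inner ℂ (b i : H) (β t) : ℂ)‖ ^ 2
              = ‖g t‖ ^ 2 * ∑ i ∈ u, ‖(inner ℂ (b i : H) (β t) : ℂ)‖ ^ 2 := by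
                simp_rw [norm_mul, mul_pow, Finset.mul_sum]
            _ ≤ ‖g t‖ ^ 2 * ‖β t‖ ^ 2 := by
                exact mul_le_mul_of_nonneg_left hb2 (by positivity)
            _ ≤ ‖g t‖ ^ 2 * Cβ ^ 2 := by
                refine mul_le_mul_of_nonneg_left ?_ (by positivity)
                exact pow_le_pow_left₀ (norm_nonneg _) (hβle t) 2
            _ = Cβ ^ 2 * ‖g t‖ ^ 2 := mul_comm _ _
      _ = Cβ ^ 2 * ‖g‖ ^ 2 := by rw [integral_const_mul, ← L2_norm_sq]
  -- Cauchy–Schwarz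
  have key : ∀ u : Finset w, ∑ i ∈ u, ‖F' i‖ * ‖G' i‖ ≤ Cα * Cβ * ‖f‖ * ‖g‖ := by
    intro u
    have h1 := Finset.sum_mul_sq_le_sq_mul_sq u (fun i => ‖F' i‖) (fun i => ‖G' i‖)
    have h2 : (∑ i ∈ u, ‖F' i‖ * ‖G' i‖) ^ 2 ≤ (Cα * Cβ * ‖f‖ * ‖g‖) ^ 2 := by
      calc (∑ i ∈ u, ‖F' i‖ * ‖G' i‖) ^ 2
          ≤ (∑ i ∈ u, ‖F' i‖ ^ 2) * ∑ i ∈ u, ‖G' i‖ ^ 2 := h1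
        _ ≤ (Cα ^ 2 * ‖f‖ ^ 2) * (Cβ ^ 2 * ‖g‖ ^ 2) := by
            refine mul_le_mul (hsumF u) (hsumG u)
              (Finset.sum_nonneg fun i _ => by positivity) (by positivity)
        _ = (Cα * Cβ * ‖f‖ * ‖g‖) ^ 2 := by ring
    have hnn : (0:ℝ) ≤ ∑ i ∈ u, ‖F' i‖ * ‖G' i‖ :=
      Finset.sum_nonneg fun i _ => by positivity
    exact (pow_le_pow_iff_left₀ hnn (by positivity) two_ne_zero).1 h2
  have hsummw : Summable (fun i : w => ‖F' i‖ * ‖G' i‖) :=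
    summable_of_sum_le (fun i => by positivity) key
  have htsumw : (∑' i : w, ‖F' i‖ * ‖G' i‖) ≤ Cα * Cβ * ‖f‖ * ‖g‖ :=
    Summable.tsum_le_of_sum_le hsummw key
  -- extend to ℕ
  set F : ℕ → Lp ℂ 2 μ := Function.extend ι F' 0 with hFdef
  set Gs : ℕ → Lp ℂ 2 μ := Function.extend ι G' 0 with hGsdef
  have h0 : ∀ n ∉ Set.range ι, (fun n => ‖F n‖ * ‖Gs n‖) n = 0 := by
    intro n hn
    have hn' : ¬∃ i, ι i = n := by simpa [Set.mem_range] using hn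
    simp only [hFdef, hGsdef, Function.extend_apply' _ _ _ hn', Pi.zero_apply,
      norm_zero, mul_zero]
  have hcomp : ((fun n => ‖F n‖ * ‖Gs n‖) ∘ ι) = fun i : w => ‖F' i‖ * ‖G' i‖ := by
    funext i
    simp only [Function.comp_apply, hFdef, hGsdef, hι.extend_apply]
  have hhs : HasSum (fun n => ‖F n‖ * ‖Gs n‖) (∑' i : w, ‖F' i‖ * ‖G' i‖) :=
    (hι.hasSum_iff h0).1 (hcomp.symm ▸ hsummw.hasSum)
  refine ⟨F, Gs, hhs.summable, by rw [hhs.tsum_eq]; exact htsumw, ?_⟩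
  -- the almost-everywhere identity
  have hF'ae : ∀ᵐ s ∂μ, ∀ i : w, F' i s = f s * (inner ℂ (α s) (b i : H) : ℂ) :=
    ae_all_iff.2 fun i => (hφm i).coeFn_toLp
  have hG'ae : ∀ᵐ t ∂μ, ∀ i : w, G' i t = g t * (inner ℂ (b i : H) (β t) : ℂ) :=
    ae_all_iff.2 fun i => (hψm i).coeFn_toLp
  have hzero : ∀ᵐ s ∂μ, (0 : Lp ℂ 2 μ) s = 0 := Lp.coeFn_zero ℂ 2 μ
  filter_upwards [ae_prod_of_ae_left (ν := μ) hF'ae, ae_prod_of_ae_left (ν := μ) hzero,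
    ae_prod_of_ae_right (μ := μ) hG'ae, ae_prod_of_ae_right (μ := μ) hzero]
    with st h1 h1z h2 h2z
  refine (hι.hasSum_iff ?_).1 ?_
  · intro n hn
    have hn' : ¬∃ i, ι i = n := by simpa [Set.mem_range] using hn
    have hFn : F n = 0 := by simp only [hFdef, Function.extend_apply' _ _ _ hn']; rfl
    rw [hFn, h1z, zero_mul]
  · have hre : ((fun n => F n st.1 * Gs n st.2) ∘ ι)
        = fun i : w => (f st.1 * g st.2) *
            ((inner ℂ (α st.1) (b i : H) : ℂ) * (inner ℂ (b i : H) (β st.2) : ℂ)) := by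
      funext i
      simp only [Function.comp_apply, hFdef, hGsdef, hι.extend_apply]
      rw [h1 i, h2 i]; ring
    rw [hre]
    exact (b.hasSum_inner_mul_inner (α st.1) (β st.2)).mul_left _
end

section
/- Let H be a complex Hilbert space, let α, β : G → H be bounded continuous functions, let φ : G → ℂ be a continuous function satisfying φ(ts⁻¹) = ⟪α(s), β(t)⟫ for all s, t ∈ G, and let f : G → ℝ be a continuous, compactly supported, nonnegative function with ∫_G f = 1. Define β' : G → H by the Bochner integral β'(t) = ∫_G f(x) β(x⁻¹t) dx. Then β' is bounded and continuous with sup_{t} ‖β'(t)‖ ≤ sup_{t} ‖β(t)‖, and the convolution f ⋆ φ, defined by (f ⋆ φ)(r) = ∫_G f(x) φ(x⁻¹r) dx, satisfies (f ⋆ φ)(ts⁻¹) = ⟪α(s), β'(t)⟫ for all s, t ∈ G. -/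
open MeasureTheory Filter Topology
open scoped ENNReal NNReal

/-- Let `G` be a locally compact group with left Haar measure
`μ` and `H` a complex Hilbert space.  Let `α, β : G → H` be bounded continuous,
let `φ : G → ℂ` be continuous with `φ(ts⁻¹) = ⟪α(s), β(t)⟫` for all `s, t`, and
let `f : G → ℝ` be continuous, compactly supported, nonnegative, with `∫ f = 1`.
Define `β'(t) = ∫ f(x)·β(x⁻¹t) dx` (a Bochner integral).  Then `β'` is continuous
and bounded with `sup_t ‖β'(t)‖ ≤ sup_t ‖β(t)‖` (we assert the pointwise bound
`‖β'(t)‖ ≤ sup_u ‖β(u)‖`), and `(f ⋆ φ)(ts⁻¹) = ⟪α(s), β'(t)⟫` for all `s, t`,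
where `(f ⋆ φ)(r) = ∫ f(x)·φ(x⁻¹r) dx`. -/
theorem convolved_multiplier_coefficient_form
    {G : Type*} [Group G] [TopologicalSpace G] [IsTopologicalGroup G]
    [LocallyCompactSpace G] [MeasurableSpace G] [BorelSpace G]
    (μ : Measure G) [μ.IsHaarMeasure]
    {H : Type*} [NormedAddCommGroup H] [InnerProductSpace ℂ H] [CompleteSpace H]
    (α β : G → H) (hαc : Continuous α) (hβc : Continuous β)
    (hαb : ∃ M : ℝ, ∀ s, ‖α s‖ ≤ M) (hβb : ∃ M : ℝ, ∀ t, ‖β t‖ ≤ M)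
    (φ : G → ℂ) (hφc : Continuous φ)
    (hrep : ∀ s t : G, φ (t * s⁻¹) = @inner ℂ H _ (α s) (β t))
    (f : G → ℝ) (hfc : Continuous f) (hfs : HasCompactSupport f)
    (hf0 : ∀ x, 0 ≤ f x) (hf1 : (∫ x, f x ∂μ) = 1)
    (β' : G → H) (hβ' : ∀ t, β' t = ∫ x, f x • β (x⁻¹ * t) ∂μ) :
    Continuous β' ∧
    (∀ t, ‖β' t‖ ≤ ⨆ u, ‖β u‖) ∧
    (∀ s t : G, (∫ x, (f x : ℂ) * φ (x⁻¹ * (t * s⁻¹)) ∂μ) = @inner ℂ H _ (α s) (β' t)) := by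
  obtain ⟨M, hM⟩ := hβb
  borelize H
  have hfi : Integrable f μ := hfc.integrable_of_hasCompactSupport hfs
  have hbdd : BddAbove (Set.range fun u => ‖β u‖) := ⟨M, by rintro _ ⟨u, rfl⟩; exact hM u⟩
  have hmeas : ∀ t : G, AEStronglyMeasurable (fun x => f x • β (x⁻¹ * t)) μ := by
    intro t
    refine (Continuous.stronglyMeasurable_of_support_subset_isCompact
      (hfc.smul (hβc.comp (continuous_inv.mul continuous_const))) hfs ?_).aestronglyMeasurable
    intro x hx
    by_contra hxs
    exact hx (by simp [image_eq_zero_of_notMem_tsupport hxs])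
  have hptbd : ∀ t x : G, ‖f x • β (x⁻¹ * t)‖ ≤ ‖f x‖ * M := by
    intro t x
    rw [norm_smul]
    exact mul_le_mul_of_nonneg_left (hM _) (norm_nonneg _)
  have hint : ∀ t : G, Integrable (fun x => f x • β (x⁻¹ * t)) μ := by
    intro t
    refine (hfi.norm.mul_const M).mono' (hmeas t) ?_
    filter_upwards with x using hptbd t x
  have hcont : Continuous β' := by
    rw [continuous_iff_continuousAt]
    intro t₀
    rw [ContinuousAt, Metric.tendsto_nhds]
    intro ε hε
    set K : Set G := tsupport f with hK
    have hKc : IsCompact K := hfs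
    set W : Set (G × G) := {p | ‖β (p.1⁻¹ * p.2) - β (p.1⁻¹ * t₀)‖ < ε / 2} with hW
    have hWo : IsOpen W := by
      have hc : Continuous fun p : G × G => ‖β (p.1⁻¹ * p.2) - β (p.1⁻¹ * t₀)‖ :=
        ((hβc.comp (continuous_fst.inv.mul continuous_snd)).sub
          (hβc.comp (continuous_fst.inv.mul continuous_const))).norm
      exact isOpen_lt hc continuous_const
    have hsub : K ×ˢ ({t₀} : Set G) ⊆ W := by
      rintro ⟨x, t⟩ ⟨hx, ht⟩
      simp only [Set.mem_singleton_iff] at ht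
      subst ht
      simp only [hW, Set.mem_setOf_eq, sub_self, norm_zero]
      positivity
    obtain ⟨u, v, hu, hv, hKu, ht₀v, huv⟩ :=
      generalized_tube_lemma hKc isCompact_singleton hWo hsub
    filter_upwards [hv.mem_nhds (ht₀v rfl)] with t htv
    have key : ∀ x : G, ‖f x • β (x⁻¹ * t) - f x • β (x⁻¹ * t₀)‖ ≤ f x * (ε / 2) := by
      intro x
      by_cases hx : x ∈ K
      · rw [← smul_sub, norm_smul, Real.norm_of_nonneg (hf0 x)]
        refine mul_le_mul_of_nonneg_left ?_ (hf0 x)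
        have := huv (Set.mk_mem_prod (hKu hx) htv)
        simpa only [hW, Set.mem_setOf_eq] using this.le
      · simp [image_eq_zero_of_notMem_tsupport hx]
    have h1 : β' t - β' t₀ = ∫ x, (f x • β (x⁻¹ * t) - f x • β (x⁻¹ * t₀)) ∂μ := by
      rw [hβ' t, hβ' t₀, integral_sub (hint t) (hint t₀)]
    have h2 : ‖β' t - β' t₀‖ ≤ ε / 2 := by
      rw [h1]
      calc ‖∫ x, (f x • β (x⁻¹ * t) - f x • β (x⁻¹ * t₀)) ∂μ‖
          ≤ ∫ x, ‖f x • β (x⁻¹ * t) - f x • β (x⁻¹ * t₀)‖ ∂μ :=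
            norm_integral_le_integral_norm _
        _ ≤ ∫ x, f x * (ε / 2) ∂μ :=
            integral_mono ((hint t).sub (hint t₀)).norm (hfi.mul_const _) key
        _ = ε / 2 := by rw [integral_mul_const, hf1, one_mul]
    rw [dist_eq_norm]
    calc ‖β' t - β' t₀‖ ≤ ε / 2 := h2
      _ < ε := by linarith
  refine ⟨hcont, ?_, ?_⟩
  · intro t
    rw [hβ' t]
    calc ‖∫ x, f x • β (x⁻¹ * t) ∂μ‖ ≤ ∫ x, ‖f x • β (x⁻¹ * t)‖ ∂μ :=
          norm_integral_le_integral_norm _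
      _ ≤ ∫ x, f x * (⨆ u, ‖β u‖) ∂μ := by
          refine integral_mono (hint t).norm (hfi.mul_const _) (fun x => ?_)
          rw [norm_smul, Real.norm_of_nonneg (hf0 x)]
          exact mul_le_mul_of_nonneg_left (le_ciSup hbdd _) (hf0 x)
      _ = ⨆ u, ‖β u‖ := by rw [integral_mul_const, hf1, one_mul]
  · intro s t
    rw [hβ' t, ← integral_inner (hint t)]
    refine integral_congr_ae (Filter.Eventually.of_forall fun x => ?_)
    have h1 : (f x : ℝ) • β (x⁻¹ * t) = (f x : ℂ) • β (x⁻¹ * t) := by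
      rw [Complex.coe_smul]
    show (f x : ℂ) * φ (x⁻¹ * (t * s⁻¹)) = @inner ℂ H _ (α s) (f x • β (x⁻¹ * t))
    rw [h1, inner_smul_right, ← hrep s (x⁻¹ * t), mul_assoc]
end
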